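/- Let n be a positive integer and 0 < α < n+1. Set Q_α(z,w) = ρ(z,w)^{−α} for z, w ∈ U. Then for every w ∈ U, ‖Q_α(·, w)‖_{L^{(n+1)/α,∞}(U)} ≤ (2^{n+1} π^n / (n−1)!)^{α/(n+1)}, and symmetrically for every z ∈ U, ‖Q_α(z, ·)‖_{L^{(n+1)/α,∞}(U)} ≤ (2^{n+1} π^n / (n−1)!)^{α/(n+1)}. -/

import Mathlib

open MeasureTheory Complex Real ENNReal

noncomputable section

/-- We model `ℂ^n` (with `n ≥ 1`) as `ℂ^{n-1} × ℂ`, writing `z = (z', z_n)`. -/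
abbrev SiegelSpace (n : ℕ) := (Fin (n - 1) → ℂ) × ℂ

/-- The Siegel upper half-space `U = {z : Im z_n > |z'|²}`. -/
def siegelDomain (n : ℕ) : Set (SiegelSpace n) :=
  {z | ∑ k, ‖z.1 k‖ ^ 2 < z.2.im}

/-- `ρ(z,w) = (i/2)(conj w_n − z_n) − ⟨z', w'⟩`. -/
def siegelRho (n : ℕ) (z w : SiegelSpace n) : ℂ :=
  Complex.I / 2 * ((starRingEnd ℂ) w.2 - z.2) - ∑ k, z.1 k * (starRingEnd ℂ) (w.1 k)

/-- `ρ(w) = ρ(w,w) = Im w_n − |w'|²`, as a real number. -/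
def siegelRhoSelf (n : ℕ) (w : SiegelSpace n) : ℝ :=
  w.2.im - ∑ k, ‖w.1 k‖ ^ 2

/-- Lebesgue measure restricted to the Siegel upper half-space. -/
def siegelMeasure (n : ℕ) : Measure (SiegelSpace n) := volume.restrict (siegelDomain n)

/-- The Bergman-type operator `T_α f(z) = ∫_U f(w) ρ(z,w)^{-α} dV(w)`. -/
def Talpha (n : ℕ) (α : ℝ) (f : SiegelSpace n → ℂ) (z : SiegelSpace n) : ℂ :=
  ∫ w in siegelDomain n, f w / siegelRho n z w ^ (α : ℂ)

/-- `T_α` is bounded from `L^p(U)` to `L^q(U)`: there is `C > 0` such that for every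
`f ∈ L^p(U)` the defining integral converges absolutely for a.e. `z ∈ U` and
`‖T_α f‖_q ≤ C ‖f‖_p`. -/
def TalphaBounded (n : ℕ) (α : ℝ) (p q : ℝ≥0∞) : Prop :=
  ∃ C : ℝ, 0 < C ∧ ∀ f : SiegelSpace n → ℂ, MemLp f p (siegelMeasure n) →
    (∀ᵐ z ∂(siegelMeasure n),
      IntegrableOn (fun w => f w / siegelRho n z w ^ (α : ℂ)) (siegelDomain n)) ∧
    eLpNorm (Talpha n α f) q (siegelMeasure n) ≤
      ENNReal.ofReal C * eLpNorm f p (siegelMeasure n)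

/-- The operator `S_α f(z) = ∫_U f(w) |ρ(z,w)|^{-α} dV(w)`. -/
def Salpha (n : ℕ) (α : ℝ) (f : SiegelSpace n → ℂ) (z : SiegelSpace n) : ℂ :=
  ∫ w in siegelDomain n, f w / ((‖siegelRho n z w‖ ^ α : ℝ) : ℂ)

/-- `S_α` is bounded from `L^p(U)` to `L^q(U)`. -/
def SalphaBounded (n : ℕ) (α : ℝ) (p q : ℝ≥0∞) : Prop :=
  ∃ C : ℝ, 0 < C ∧ ∀ f : SiegelSpace n → ℂ, MemLp f p (siegelMeasure n) →
    (∀ᵐ z ∂(siegelMeasure n),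
      IntegrableOn (fun w => f w / ((‖siegelRho n z w‖ ^ α : ℝ) : ℂ))
        (siegelDomain n)) ∧
    eLpNorm (Salpha n α f) q (siegelMeasure n) ≤
      ENNReal.ofReal C * eLpNorm f p (siegelMeasure n)

/-- The point `𝐢 = (0', i) ∈ U`. -/
def siegelPt (n : ℕ) : SiegelSpace n := (0, Complex.I)

/-- The dilation `t ∘ z = (t z', t² z_n)`. -/
def dilate (n : ℕ) (t : ℝ) (z : SiegelSpace n) : SiegelSpace n :=
  (fun k => t * z.1 k, t ^ 2 * z.2)

/-- The weak-`L^r` quasinorm `‖f‖_{L^{r,∞}(U)} = sup_{λ>0} λ |{z ∈ U : |f z| > λ}|^{1/r}`. -/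
def weakNorm (n : ℕ) (r : ℝ) (f : SiegelSpace n → ℂ) : ℝ≥0∞ :=
  ⨆ (lam : ℝ) (_ : 0 < lam), ENNReal.ofReal lam *
    volume {z | z ∈ siegelDomain n ∧ lam < ‖f z‖} ^ (1 / r)

/-- The affine self-map of `U` associated to the Heisenberg group element `[ζ, t]`:
`h(z', z_n) = (z' + ζ, z_n + t + 2i⟨z', ζ⟩ + i|ζ|²)`. -/
def heis (n : ℕ) (ζ : Fin (n - 1) → ℂ) (t : ℝ) (z : SiegelSpace n) : SiegelSpace n :=
  (z.1 + ζ,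
    z.2 + t + 2 * Complex.I * ∑ k, z.1 k * (starRingEnd ℂ) (ζ k)
      + Complex.I * ((∑ k, ‖ζ k‖ ^ 2 : ℝ) : ℂ))

lemma rho_re (n : ℕ) (z w : SiegelSpace n) :
    (siegelRho n z w).re = (z.2.im + w.2.im) / 2 - ∑ k, (z.1 k * (starRingEnd ℂ) (w.1 k)).re := by
  simp [siegelRho, Complex.re_sum, Complex.div_re, Complex.mul_re, Complex.normSq]
  ring

lemma rho_im (n : ℕ) (z w : SiegelSpace n) :
    (siegelRho n z w).im = (w.2.re - z.2.re) / 2 - ∑ k, (z.1 k * (starRingEnd ℂ) (w.1 k)).im := by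
  simp [siegelRho, Complex.im_sum, Complex.div_im, Complex.mul_im, Complex.normSq]
  ring

lemma sq_abs_sub (a b : ℂ) :
    ‖a - b‖ ^ 2 = ‖a‖ ^ 2 + ‖b‖ ^ 2 - 2 * (a * (starRingEnd ℂ) b).re := by
  simp only [Complex.sq_norm]
  exact Complex.normSq_sub a b

lemma rho_re_eq (n : ℕ) (z w : SiegelSpace n) :
    2 * (siegelRho n z w).re =
      (z.2.im - ∑ k, ‖z.1 k‖ ^ 2) + (w.2.im - ∑ k, ‖w.1 k‖ ^ 2)
        + ∑ k, ‖z.1 k - w.1 k‖ ^ 2 := by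
  rw [rho_re]
  simp only [sq_abs_sub, Finset.sum_add_distrib, Finset.sum_sub_distrib, ← Finset.mul_sum]
  ring

lemma abs_rho_conj (n : ℕ) (z w : SiegelSpace n) :
    ‖siegelRho n w z‖ = ‖siegelRho n z w‖ := by
  have h : siegelRho n w z = (starRingEnd ℂ) (siegelRho n z w) := by
    simp only [siegelRho, map_sub, map_mul, map_sum, Complex.conj_conj, map_div₀,
      Complex.conj_I, map_ofNat]
    congr 1
    · ring
    · exact Finset.sum_congr rfl fun k _ => mul_comm _ _
  rw [h, Complex.norm_conj]

lemma volume_complex_ball (m : ℕ) (c : Fin m → ℂ) {R : ℝ} (hR : 0 < R) :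
    volume {x : Fin m → ℂ | ∑ k, ‖x k - c k‖ ^ 2 < R}
      = ENNReal.ofReal ((π * R) ^ m / m.factorial) := by
  have htrans : {x : Fin m → ℂ | ∑ k, ‖x k - c k‖ ^ 2 < R}
      = (fun x => x + (-c)) ⁻¹' {y : Fin m → ℂ | ∑ k, ‖y k‖ ^ 2 < R} := by
    ext x; simp [sub_eq_add_neg]
  rw [htrans, measure_preimage_add_right]
  rcases Nat.eq_zero_or_pos m with hm | hm
  · subst hm
    have : {y : Fin 0 → ℂ | ∑ k, ‖y k‖ ^ 2 < R} = Set.univ := by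
      ext y; simp [hR]
    rw [this, volume_pi, Measure.pi_univ]
    simp
  · haveI : Nonempty (Fin m) := Fin.pos_iff_nonempty.mp hm
    have hset : {y : Fin m → ℂ | ∑ k, ‖y k‖ ^ 2 < R}
        = {y : Fin m → ℂ | (∑ i, ‖y i‖ ^ (2:ℝ)) ^ ((1:ℝ)/2) < Real.sqrt R} := by
      ext y
      have h1 : ∀ i, ‖y i‖ ^ (2:ℝ) = ‖y i‖ ^ 2 := by
        intro i; rw [Real.rpow_two]
      simp only [Set.mem_setOf_eq, h1]
      rw [← Real.sqrt_eq_rpow, Real.sqrt_lt_sqrt_iff (by positivity)]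
    rw [hset, Complex.volume_sum_rpow_lt _ one_le_two]
    have h2 : (2:ℝ) / 2 + 1 = 2 := by norm_num
    have h3 : 2 * (Fintype.card (Fin m) : ℝ) / 2 + 1 = (m:ℝ) + 1 := by
      rw [Fintype.card_fin]; ring
    rw [h2, h3, Real.Gamma_two, Real.Gamma_nat_eq_factorial]
    have h5 : ENNReal.ofReal (Real.sqrt R) ^ (2 * Fintype.card (Fin m))
        = ENNReal.ofReal (R ^ m) := by
      rw [← ENNReal.ofReal_pow (Real.sqrt_nonneg R)]
      congr 1
      rw [Fintype.card_fin, pow_mul, Real.sq_sqrt hR.le]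
    rw [h5, ← ENNReal.ofReal_mul (by positivity)]
    congr 1
    rw [Fintype.card_fin]
    field_simp
    ring


lemma rho_continuous (n : ℕ) (w : SiegelSpace n) :
    Continuous fun z : SiegelSpace n => siegelRho n z w := by
  unfold siegelRho
  exact (continuous_const.mul (continuous_const.sub continuous_snd)).sub
    (continuous_finset_sum _ fun k _ =>
      ((continuous_apply k).comp continuous_fst).mul continuous_const)

lemma domain_open (n : ℕ) : IsOpen (siegelDomain n) := by
  have h1 : Continuous fun z : SiegelSpace n => ∑ k, ‖z.1 k‖ ^ 2 :=
    continuous_finset_sum _ fun k _ =>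
      (continuous_norm.comp ((continuous_apply k).comp continuous_fst)).pow 2
  exact isOpen_lt h1 (Complex.continuous_im.comp continuous_snd)

lemma measure_rho_lt (n : ℕ) (hn : 0 < n) {w : SiegelSpace n} (hw : w ∈ siegelDomain n)
    {δ : ℝ} (hδ : 0 < δ) :
    volume {z : SiegelSpace n | z ∈ siegelDomain n ∧ ‖siegelRho n z w‖ < δ}
      ≤ ENNReal.ofReal (2 ^ (n + 1) * π ^ n / ((n - 1).factorial : ℝ) * δ ^ (n + 1)) := by
  obtain ⟨m, rfl⟩ : ∃ m, n = m + 1 := ⟨n - 1, (Nat.succ_pred_eq_of_pos hn).symm⟩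
  have hm : m + 1 - 1 = m := rfl
  have hEopen : IsOpen {z : SiegelSpace (m+1) | z ∈ siegelDomain (m+1) ∧ ‖siegelRho (m+1) z w‖ < δ} :=
    (domain_open (m+1)).inter
      (isOpen_lt (continuous_norm.comp (rho_continuous (m+1) w)) continuous_const)
  set E := {z : SiegelSpace (m+1) | z ∈ siegelDomain (m+1) ∧ ‖siegelRho (m+1) z w‖ < δ} with hE
  set B := {x : Fin ((m+1) - 1) → ℂ | ∑ k, ‖x k - w.1 k‖ ^ 2 < 2 * δ} with hB
  have hBopen : IsOpen B := by
    have h1 : Continuous fun x : Fin ((m+1)-1) → ℂ => ∑ k, ‖x k - w.1 k‖ ^ 2 :=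
      continuous_finset_sum _ fun k _ =>
        (continuous_norm.comp ((continuous_apply k).sub continuous_const)).pow 2
    exact isOpen_lt h1 continuous_const
  have hwU : ∑ k, ‖w.1 k‖ ^ 2 < w.2.im := hw
  have hwpos : (0:ℝ) < w.2.im - ∑ k, ‖w.1 k‖ ^ 2 := by linarith
  -- slice bounds
  have hslice : ∀ x : Fin ((m+1)-1) → ℂ,
      volume (Prod.mk x ⁻¹' E) ≤ B.indicator (fun _ => ENNReal.ofReal (8 * δ ^ 2)) x := by
    intro x
    have hmem : ∀ ζ : ℂ, (x, ζ) ∈ E → x ∈ B := by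
      intro ζ hζ
      obtain ⟨hU, habs⟩ := hζ
      have hre : (0:ℝ) < ζ.im - ∑ k, ‖x k‖ ^ 2 := by
        have : ∑ k, ‖x k‖ ^ 2 < ζ.im := hU
        linarith
      have habsre : |(siegelRho (m+1) (x, ζ) w).re| < δ :=
        lt_of_le_of_lt (Complex.abs_re_le_norm _) habs
      rw [abs_lt] at habsre
      have hree := rho_re_eq (m+1) (x, ζ) w
      dsimp only at hree
      simp only [hB, Set.mem_setOf_eq]
      linarith [habsre.2]
    by_cases hx : x ∈ B
    · rw [Set.indicator_of_mem hx]
      set a : ℝ := ∑ k, ‖x k‖ ^ 2 with ha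
      set b : ℝ := w.2.re - 2 * ∑ k, (x k * (starRingEnd ℂ) (w.1 k)).im with hb
      have hsub : Prod.mk x ⁻¹' E ⊆
          Complex.measurableEquivRealProd ⁻¹' (Set.Ioo (b - 2*δ) (b + 2*δ) ×ˢ Set.Ioo a (a + 2*δ)) := by
        intro ζ hζ
        obtain ⟨hU, habs⟩ := hζ
        have hU' : a < ζ.im := hU
        have habsre : |(siegelRho (m+1) (x, ζ) w).re| < δ :=
          lt_of_le_of_lt (Complex.abs_re_le_norm _) habs
        have habsim : |(siegelRho (m+1) (x, ζ) w).im| < δ :=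
          lt_of_le_of_lt (Complex.abs_im_le_norm _) habs
        rw [abs_lt] at habsre habsim
        have hree := rho_re_eq (m+1) (x, ζ) w
        have hime := rho_im (m+1) (x, ζ) w
        dsimp only at hree hime
        have hsumnn : (0:ℝ) ≤ ∑ k, ‖x k - w.1 k‖ ^ 2 :=
          Finset.sum_nonneg fun k _ => sq_nonneg _
        have himlt : ζ.im < a + 2 * δ := by linarith [habsre.2]
        have hre1 : b - 2*δ < ζ.re := by linarith [habsim.2]
        have hre2 : ζ.re < b + 2*δ := by linarith [habsim.1]
        simp only [Set.mem_preimage, Complex.measurableEquivRealProd_apply, Set.mem_prod,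
          Set.mem_Ioo]
        exact ⟨⟨hre1, hre2⟩, hU', himlt⟩
      calc volume (Prod.mk x ⁻¹' E) ≤ volume (Complex.measurableEquivRealProd ⁻¹'
            (Set.Ioo (b - 2*δ) (b + 2*δ) ×ˢ Set.Ioo a (a + 2*δ))) := measure_mono hsub
        _ = volume (Set.Ioo (b - 2*δ) (b + 2*δ) ×ˢ Set.Ioo a (a + 2*δ)) :=
            Complex.volume_preserving_equiv_real_prod.measure_preimage
              (measurableSet_Ioo.prod measurableSet_Ioo).nullMeasurableSet
        _ = ENNReal.ofReal (8 * δ ^ 2) := by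
            rw [Measure.volume_eq_prod, Measure.prod_prod, Real.volume_Ioo, Real.volume_Ioo,
              ← ENNReal.ofReal_mul (by linarith)]
            congr 1; ring
    · rw [Set.indicator_of_notMem hx]
      have : Prod.mk x ⁻¹' E = ∅ := by
        ext ζ; simp only [Set.mem_preimage, Set.mem_empty_iff_false, iff_false]
        exact fun h => hx (hmem ζ h)
      simp [this]
  -- Fubini
  have hvol : volume E ≤ ENNReal.ofReal (8 * δ ^ 2) * volume B := by
    rw [Measure.volume_eq_prod, Measure.prod_apply hEopen.measurableSet]
    calc ∫⁻ x, volume (Prod.mk x ⁻¹' E)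
        ≤ ∫⁻ x, B.indicator (fun _ => ENNReal.ofReal (8 * δ ^ 2)) x := lintegral_mono hslice
      _ = ENNReal.ofReal (8 * δ ^ 2) * volume B := by
          rw [lintegral_indicator hBopen.measurableSet]
          simp [Measure.restrict_apply MeasurableSet.univ]
  refine hvol.trans ?_
  rw [hB, volume_complex_ball ((m+1)-1) w.1 (by linarith : (0:ℝ) < 2*δ),
    ← ENNReal.ofReal_mul (by positivity)]
  apply ENNReal.ofReal_le_ofReal
  have hpi : (8:ℝ) ≤ 4 * π := by nlinarith [Real.pi_gt_three]
  have e1 : 8 * δ^2 * ((π * (2*δ)) ^ ((m+1)-1) / (((m+1)-1).factorial : ℝ))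
      = 8 * (π^m * 2^m * δ^(m+2)) / (m.factorial : ℝ) := by
    rw [hm, mul_pow, mul_pow]; ring
  have e2 : 2 ^ ((m+1) + 1) * π ^ (m+1) / (((m+1) - 1).factorial : ℝ) * δ ^ ((m+1) + 1)
      = 4 * π * (π^m * 2^m * δ^(m+2)) / (m.factorial : ℝ) := by
    rw [hm]; ring
  rw [e1, e2]
  gcongr

lemma rho_re_pos (n : ℕ) {z w : SiegelSpace n} (hz : z ∈ siegelDomain n)
    (hw : w ∈ siegelDomain n) : 0 < (siegelRho n z w).re := by
  have hz' : ∑ k, ‖z.1 k‖ ^ 2 < z.2.im := hz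
  have hw' : ∑ k, ‖w.1 k‖ ^ 2 < w.2.im := hw
  have hree := rho_re_eq n z w
  have hsumnn : (0:ℝ) ≤ ∑ k, ‖z.1 k - w.1 k‖ ^ 2 :=
    Finset.sum_nonneg fun k _ => sq_nonneg _
  linarith

lemma rho_ne_zero (n : ℕ) {z w : SiegelSpace n} (hz : z ∈ siegelDomain n)
    (hw : w ∈ siegelDomain n) : siegelRho n z w ≠ 0 := by
  intro h
  have := rho_re_pos n hz hw
  rw [h] at this
  simp at this

lemma weak_core (n : ℕ) (hn : 0 < n) (α : ℝ) (hα0 : 0 < α)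
    (w : SiegelSpace n) (hw : w ∈ siegelDomain n) (f : SiegelSpace n → ℂ)
    (hf : ∀ z ∈ siegelDomain n,
      ‖f z‖ = ‖siegelRho n z w‖ ^ (-α)) :
    weakNorm n (((n : ℝ) + 1) / α) f
      ≤ ENNReal.ofReal
          ((2 ^ (n + 1) * π ^ n / (Nat.factorial (n - 1) : ℝ)) ^ (α / ((n : ℝ) + 1))) := by
  set K : ℝ := 2 ^ (n + 1) * π ^ n / (Nat.factorial (n - 1) : ℝ) with hK
  have hKpos : 0 < K := by
    apply div_pos (by positivity)
    exact_mod_cast Nat.factorial_pos (n - 1)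
  set β : ℝ := α / ((n : ℝ) + 1) with hβ
  have hn1 : (0:ℝ) < (n : ℝ) + 1 := by positivity
  have hβpos : 0 < β := div_pos hα0 hn1
  rw [weakNorm]
  apply iSup_le; intro lam
  apply iSup_le; intro hlam
  set δ : ℝ := lam ^ (-(1/α)) with hδdef
  have hδ : 0 < δ := Real.rpow_pos_of_pos hlam _
  have hsub : {z | z ∈ siegelDomain n ∧ lam < ‖f z‖}
      ⊆ {z : SiegelSpace n | z ∈ siegelDomain n ∧ ‖siegelRho n z w‖ < δ} := by
    intro z ⟨hz, hlt⟩
    refine ⟨hz, ?_⟩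
    rw [hf z hz] at hlt
    have hρpos : 0 < ‖siegelRho n z w‖ :=
      norm_pos_iff.mpr (rho_ne_zero n hz hw)
    have hinv : (0:ℝ) < 1/α := by positivity
    have key := Real.rpow_lt_rpow_of_neg hlam hlt (by linarith : -(1/α) < 0)
    have heq : (‖siegelRho n z w‖ ^ (-α)) ^ (-(1/α))
        = ‖siegelRho n z w‖ := by
      rw [← Real.rpow_mul hρpos.le]
      have : -α * -(1/α) = 1 := by field_simp
      rw [this, Real.rpow_one]
    rwa [heq] at key
  have hmeas := (measure_mono hsub).trans (measure_rho_lt n hn hw hδ)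
  have h1r : 1 / (((n : ℝ) + 1) / α) = β := by rw [one_div_div]
  rw [h1r]
  calc ENNReal.ofReal lam *
        volume {z | z ∈ siegelDomain n ∧ lam < ‖f z‖} ^ β
      ≤ ENNReal.ofReal lam * ENNReal.ofReal (K * δ ^ (n + 1)) ^ β := by
        gcongr
    _ = ENNReal.ofReal (K ^ β) := by
        rw [ENNReal.ofReal_rpow_of_nonneg (by positivity) hβpos.le,
          ← ENNReal.ofReal_mul hlam.le]
        congr 1
        rw [Real.mul_rpow hKpos.le (by positivity)]
        have hδα : (δ ^ (n + 1) : ℝ) ^ β = lam⁻¹ := by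
          rw [← Real.rpow_natCast δ (n + 1), ← Real.rpow_mul hδ.le, hδdef,
            ← Real.rpow_mul hlam.le]
          have : -(1/α) * (((n:ℕ) + 1 : ℕ) * β) = -1 := by
            push_cast [hβ]
            field_simp
          rw [this, Real.rpow_neg_one]
        rw [hδα]
        field_simp

/-- For `0 < α < n+1` and `Q_α(z,w) = ρ(z,w)^{−α}`, the weak-`L^{(n+1)/α}` norms of
`Q_α(·,w)` and `Q_α(z,·)` are bounded by `(2^{n+1} π^n / (n−1)!)^{α/(n+1)}`. -/
theorem weakNorm_Qalpha_le (n : ℕ) (hn : 0 < n) (α : ℝ)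
    (hα0 : 0 < α) (hα1 : α < (n : ℝ) + 1) :
    (∀ w ∈ siegelDomain n,
      weakNorm n (((n : ℝ) + 1) / α) (fun z => siegelRho n z w ^ (-(α : ℂ)))
        ≤ ENNReal.ofReal
            ((2 ^ (n + 1) * π ^ n / (Nat.factorial (n - 1) : ℝ)) ^ (α / ((n : ℝ) + 1)))) ∧
    (∀ z ∈ siegelDomain n,
      weakNorm n (((n : ℝ) + 1) / α) (fun w => siegelRho n z w ^ (-(α : ℂ)))
        ≤ ENNReal.ofReal
            ((2 ^ (n + 1) * π ^ n / (Nat.factorial (n - 1) : ℝ)) ^ (α / ((n : ℝ) + 1)))) := by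
  have hc : (-(α:ℂ)) = (((-α : ℝ)) : ℂ) := by push_cast; ring
  constructor
  · intro w hw
    apply weak_core n hn α hα0 w hw
    intro z hz
    simp only [hc, Complex.norm_cpow_real]
  · intro z hz
    apply weak_core n hn α hα0 z hz
    intro w' hw'
    simp only [hc, Complex.norm_cpow_real]
    rw [abs_rho_conj n w' z]
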